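/- Let (γ, ℓ, ℓ⁽²⁾) be coordinate hypersurface metric data on U with inverse blocks (P, n, n⁽²⁾) and derived fields F, U, Γ̊, and let τ^{ab} be any smooth symmetric field on U; set τ^b_a := τ^{bc}γ_{ca}. Then the following two identities hold on U: (1) ∇̊_a(τ^{ab}ℓ_b) + τ^{ab}ℓ_b(½n⁽²⁾∂_aℓ⁽²⁾ + F_{ac}n^c) = |det 𝔸|^{−1/2} ∂_a(|det 𝔸|^{1/2} τ^{ab}ℓ_b); (2) ∇̊_bτ^b_a + τ^b_a(½n⁽²⁾∂_bℓ⁽²⁾ + F_{bc}n^c) + τ^{bc}ℓ_cU_{ba} = |det 𝔸|^{−1/2} ∂_b(|det 𝔸|^{1/2} τ^b_a) − ½τ^{bd}∂_aγ_{bd}. (Hence the shell field equations, whose left-hand sides are the expressions on the left above with τ the shell energy–momentum tensor, take in coordinates the stated divergence form.) -/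

import Mathlib

open scoped BigOperators

noncomputable section

namespace HypData

variable {m : ℕ}

/-- Scalar field on ℝ^m. -/
abbrev Sc (m : ℕ) := (Fin m → ℝ) → ℝ
/-- One-index field. -/
abbrev Vec (m : ℕ) := (Fin m → ℝ) → Fin m → ℝ
/-- Two-index field. -/
abbrev Ten (m : ℕ) := (Fin m → ℝ) → Fin m → Fin m → ℝ
/-- Connection coefficients `Γ x c a b = Γ^c_{ab}` (first index upper). -/
abbrev Conn (m : ℕ) := (Fin m → ℝ) → Fin m → Fin m → Fin m → ℝ
/-- Three-index field. -/
abbrev Ten3 (m : ℕ) := (Fin m → ℝ) → Fin m → Fin m → Fin m → ℝ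

/-- Partial derivative of `f` in the `a`-th coordinate direction at `x`. -/
def pd (a : Fin m) (f : Sc m) (x : Fin m → ℝ) : ℝ :=
  fderiv ℝ f x (Pi.single a 1)

/-- Kronecker delta. -/
def kd (a b : Fin m) : ℝ := if a = b then 1 else 0

/-- Equations (EqP1)-(EqP4): `[[P,n],[nᵀ,n2]]` consists of the inverse blocks of
the block matrix `[[γ,ℓ],[ℓᵀ,ℓ2]]`. -/
def InvBlocks (γ : Fin m → Fin m → ℝ) (ℓ : Fin m → ℝ) (ℓ2 : ℝ)
    (P : Fin m → Fin m → ℝ) (n : Fin m → ℝ) (n2 : ℝ) : Prop :=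
  (∀ a b, (∑ c, P a c * γ c b) + n a * ℓ b = kd a b) ∧
  (∀ a, (∑ b, P a b * ℓ b) + ℓ2 * n a = 0) ∧
  ((∑ a, n a * ℓ a) + n2 * ℓ2 = 1) ∧
  (∀ a, (∑ b, γ a b * n b) + n2 * ℓ a = 0)

/-- ∇_a ω_b. -/
def covD1 (Γ : Conn m) (ω : Vec m) (x : Fin m → ℝ) (a b : Fin m) : ℝ :=
  pd a (fun y => ω y b) x - ∑ d, Γ x d a b * ω x d

/-- ∇_a X^b. -/
def covD1U (Γ : Conn m) (X : Vec m) (x : Fin m → ℝ) (a b : Fin m) : ℝ :=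
  pd a (fun y => X y b) x + ∑ d, Γ x b a d * X x d

/-- ∇_a T_{bc}. -/
def covD2 (Γ : Conn m) (T : Ten m) (x : Fin m → ℝ) (a b c : Fin m) : ℝ :=
  pd a (fun y => T y b c) x - (∑ d, Γ x d a b * T x d c) - (∑ d, Γ x d a c * T x b d)

/-- ∇_a T^{bc}. -/
def covD2U (Γ : Conn m) (T : Ten m) (x : Fin m → ℝ) (a b c : Fin m) : ℝ :=
  pd a (fun y => T y b c) x + (∑ d, Γ x b a d * T x d c) + (∑ d, Γ x c a d * T x b d)

/-- ∇_a S^b_c (first index of `S` upper, second lower). -/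
def covD11 (Γ : Conn m) (S : Ten m) (x : Fin m → ℝ) (a b c : Fin m) : ℝ :=
  pd a (fun y => S y b c) x + (∑ d, Γ x b a d * S x d c) - (∑ d, Γ x d a c * S x b d)

/-- ∇_a Q^{bcd}. -/
def covD3U (Γ : Conn m) (Q : Ten3 m) (x : Fin m → ℝ) (a b c d : Fin m) : ℝ :=
  pd a (fun y => Q y b c d) x + (∑ f, Γ x b a f * Q x f c d)
    + (∑ f, Γ x c a f * Q x b f d) + (∑ f, Γ x d a f * Q x b c f)

/-- Curvature `R^a_{bcd} = ∂_cΓ^a_{db} − ∂_dΓ^a_{cb} + Γ^a_{cf}Γ^f_{db} − Γ^a_{df}Γ^f_{cb}`. -/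
def curv (Γ : Conn m) (x : Fin m → ℝ) (a b c d : Fin m) : ℝ :=
  pd c (fun y => Γ y a d b) x - pd d (fun y => Γ y a c b) x
    + (∑ f, Γ x a c f * Γ x f d b) - (∑ f, Γ x a d f * Γ x f c b)

/-- `F_{ab} = ½(∂_aℓ_b − ∂_bℓ_a)`. -/
def Ff (ℓ : Vec m) (x : Fin m → ℝ) (a b : Fin m) : ℝ :=
  (pd a (fun y => ℓ y b) x - pd b (fun y => ℓ y a) x) / 2

/-- `U_{ab} = ½(n^c∂_cγ_{ab} + γ_{cb}∂_an^c + γ_{ac}∂_bn^c + ℓ_a∂_bn⁽²⁾ + ℓ_b∂_an⁽²⁾)`. -/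
def Uf (γ : Ten m) (ℓ : Vec m) (n : Vec m) (n2 : Sc m)
    (x : Fin m → ℝ) (a b : Fin m) : ℝ :=
  ((∑ c, (n x c * pd c (fun y => γ y a b) x + γ x c b * pd a (fun y => n y c) x
      + γ x a c * pd b (fun y => n y c) x))
    + ℓ x a * pd b n2 x + ℓ x b * pd a n2 x) / 2

/-- Metric hypersurface connection `Γ̊^c_{ab}`. -/
def Gam0 (γ : Ten m) (ℓ : Vec m) (P : Ten m) (n : Vec m)
    (x : Fin m → ℝ) (c a b : Fin m) : ℝ :=
  (∑ d, P x c d * (pd a (fun y => γ y b d) x + pd b (fun y => γ y a d) x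
      - pd d (fun y => γ y a b) x)) / 2
  + n x c * (pd a (fun y => ℓ y b) x + pd b (fun y => ℓ y a) x) / 2

/-- The connection `Γ̄^c_{ab} = Γ̊^c_{ab} − n^c Y_{ab}`. -/
def GamB (γ : Ten m) (ℓ : Vec m) (P : Ten m) (n : Vec m) (Y : Ten m)
    (x : Fin m → ℝ) (c a b : Fin m) : ℝ :=
  Gam0 γ ℓ P n x c a b - n x c * Y x a b

/-- `K_{ab} = n⁽²⁾Y_{ab} + U_{ab}`. -/
def Kf (γ : Ten m) (ℓ : Vec m) (n : Vec m) (n2 : Sc m) (Y : Ten m)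
    (x : Fin m → ℝ) (a b : Fin m) : ℝ :=
  n2 x * Y x a b + Uf γ ℓ n n2 x a b

/-- `φ_a = ½n⁽²⁾∂_aℓ⁽²⁾ + n^b(Y_{ab} + F_{ab})`. -/
def phif (ℓ : Vec m) (ℓ2 : Sc m) (n : Vec m) (n2 : Sc m) (Y : Ten m)
    (x : Fin m → ℝ) (a : Fin m) : ℝ :=
  n2 x * pd a ℓ2 x / 2 + ∑ b, n x b * (Y x a b + Ff ℓ x a b)

/-- `Ψ^b_a = P^{bc}(Y_{ac} + F_{ac}) + ½n^b∂_aℓ⁽²⁾`. -/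
def Psif (ℓ : Vec m) (ℓ2 : Sc m) (P : Ten m) (n : Vec m) (Y : Ten m)
    (x : Fin m → ℝ) (b a : Fin m) : ℝ :=
  (∑ c, P x b c * (Y x a c + Ff ℓ x a c)) + n x b * pd a ℓ2 x / 2

/-- Smoothness of a scalar field on `U`. -/
def SmSc (U : Set (Fin m → ℝ)) (f : Sc m) : Prop := ContDiffOn ℝ (⊤ : ℕ∞) f U
/-- Smoothness of a one-index field on `U`. -/
def SmVec (U : Set (Fin m → ℝ)) (f : Vec m) : Prop :=
  ∀ a, ContDiffOn ℝ (⊤ : ℕ∞) (fun x => f x a) U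
/-- Smoothness of a two-index field on `U`. -/
def SmTen (U : Set (Fin m → ℝ)) (f : Ten m) : Prop :=
  ∀ a b, ContDiffOn ℝ (⊤ : ℕ∞) (fun x => f x a b) U

/-- Smooth coordinate hypersurface metric data on `U`. -/
def MetricData (U : Set (Fin m → ℝ)) (γ : Ten m) (ℓ : Vec m) (ℓ2 : Sc m)
    (P : Ten m) (n : Vec m) (n2 : Sc m) : Prop :=
  SmTen U γ ∧ SmVec U ℓ ∧ SmSc U ℓ2 ∧ SmTen U P ∧ SmVec U n ∧ SmSc U n2 ∧
  (∀ x ∈ U, ∀ a b, γ x a b = γ x b a) ∧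
  (∀ x ∈ U, ∀ a b, P x a b = P x b a) ∧
  (∀ x ∈ U, InvBlocks (γ x) (ℓ x) (ℓ2 x) (P x) (n x) (n2 x))

/-- Gauge-transformed `ℓ`. -/
def gaugeL (γ : Ten m) (ℓ : Vec m) (u : Sc m) (V : Vec m) : Vec m :=
  fun x a => u x * (ℓ x a + ∑ b, V x b * γ x a b)

/-- Gauge-transformed `ℓ⁽²⁾`. -/
def gaugeL2 (γ : Ten m) (ℓ : Vec m) (ℓ2 : Sc m) (u : Sc m) (V : Vec m) : Sc m :=
  fun x => u x ^ 2 * (ℓ2 x + 2 * (∑ a, V x a * ℓ x a) + ∑ a, ∑ b, V x a * V x b * γ x a b)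

/-- Gauge-transformed `Y`. -/
def gaugeY (γ : Ten m) (ℓ : Vec m) (Y : Ten m) (u : Sc m) (V : Vec m) : Ten m :=
  fun x a b => u x * Y x a b + (ℓ x a * pd b u x + ℓ x b * pd a u x) / 2
    + ((u x * ∑ c, V x c * pd c (fun y => γ y a b) x)
      + (∑ c, γ x c b * pd a (fun y => u y * V y c) x)
      + (∑ c, γ x a c * pd b (fun y => u y * V y c) x)) / 2

/-- Gauge-transformed `P`. -/
def gaugeP (P : Ten m) (n : Vec m) (n2 : Sc m) (V : Vec m) : Ten m :=
  fun x a b => P x a b + n2 x * V x a * V x b - V x a * n x b - V x b * n x a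

/-- Gauge-transformed `n`. -/
def gaugeN (n : Vec m) (n2 : Sc m) (u : Sc m) (V : Vec m) : Vec m :=
  fun x a => (u x)⁻¹ * (n x a - n2 x * V x a)

/-- Gauge-transformed `n⁽²⁾`. -/
def gaugeN2 (n2 : Sc m) (u : Sc m) : Sc m :=
  fun x => ((u x) ^ 2)⁻¹ * n2 x

/-- Shell energy-momentum tensor `τ^{fa}` built pointwise from the jump `V_{ab}`. -/
def tauP (P : Fin m → Fin m → ℝ) (n : Fin m → ℝ) (n2 : ℝ) (V : Fin m → Fin m → ℝ)
    (f a : Fin m) : ℝ :=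
  (∑ c, ∑ d, (n f * P a c + n a * P f c) * n d * V c d)
  - (∑ c, ∑ d, (n2 * P f c * P a d + P f a * n c * n d) * V c d)
  + (n2 * P f a - n f * n a) * (∑ c, ∑ d, P c d * V c d)

/-- `τ^f_c = −(n⁽²⁾P^{bd} − n^bn^d)(δ^f_dV_{bc} − δ^f_cV_{bd})`. -/
def tauMixP (P : Fin m → Fin m → ℝ) (n : Fin m → ℝ) (n2 : ℝ)
    (V : Fin m → Fin m → ℝ) (f c : Fin m) : ℝ :=
  -(∑ b, ∑ d, (n2 * P b d - n b * n d) * (kd f d * V b c - kd f c * V b d))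

/-- `T^f = (P^{bf}n^c − P^{bc}n^f)V_{bc}`. -/
def tauVecP (P : Fin m → Fin m → ℝ) (n : Fin m → ℝ) (V : Fin m → Fin m → ℝ)
    (f : Fin m) : ℝ :=
  ∑ b, ∑ c, (P b f * n c - P b c * n f) * V b c

/-- The block matrix 𝔸. -/
def blockA (γ : Ten m) (ℓ : Vec m) (ℓ2 : Sc m) (x : Fin m → ℝ) :
    Matrix (Fin m ⊕ Unit) (Fin m ⊕ Unit) ℝ :=
  fun i j =>
    match i, j with
    | Sum.inl a, Sum.inl b => γ x a b
    | Sum.inl a, Sum.inr _ => ℓ x a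
    | Sum.inr _, Sum.inl b => ℓ x b
    | Sum.inr _, Sum.inr _ => ℓ2 x

/-- `det 𝔸` as a scalar field. -/
def detA (γ : Ten m) (ℓ : Vec m) (ℓ2 : Sc m) (x : Fin m → ℝ) : ℝ :=
  (blockA γ ℓ ℓ2 x).det

end HypData

namespace HypAux
open HypData

variable {m : ℕ} {x : Fin m → ℝ} {a : Fin m}

theorem pd_congr_nhds {f g : Sc m} (h : f =ᶠ[nhds x] g) :
    pd a f x = pd a g x := by unfold HypData.pd; rw [h.fderiv_eq]

theorem pd_congrU {U : Set (Fin m → ℝ)} (hU : IsOpen U) (hx : x ∈ U)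
    {f g : Sc m} (h : ∀ y ∈ U, f y = g y) : pd a f x = pd a g x :=
  pd_congr_nhds (Filter.eventuallyEq_of_mem (hU.mem_nhds hx) h)

theorem pd_const (c : ℝ) : pd a (fun _ => c) x = 0 := by simp [HypData.pd]

theorem pd_add {f g : Sc m} (hf : DifferentiableAt ℝ f x)
    (hg : DifferentiableAt ℝ g x) :
    pd a (fun y => f y + g y) x = pd a f x + pd a g x := by
  simp [HypData.pd, fderiv_fun_add hf hg]

theorem pd_mul {f g : Sc m} (hf : DifferentiableAt ℝ f x)
    (hg : DifferentiableAt ℝ g x) :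
    pd a (fun y => f y * g y) x = f x * pd a g x + g x * pd a f x := by
  simp [HypData.pd, fderiv_fun_mul hf hg]

theorem pd_const_mul {f : Sc m} (hf : DifferentiableAt ℝ f x) (c : ℝ) :
    pd a (fun y => c * f y) x = c * pd a f x := by
  simp [HypData.pd, fderiv_const_mul hf c]

theorem pd_sum {ι : Type*} {s : Finset ι} {f : ι → Sc m}
    (h : ∀ i ∈ s, DifferentiableAt ℝ (f i) x) :
    pd a (fun y => ∑ i ∈ s, f i y) x = ∑ i ∈ s, pd a (f i) x := by
  simp [HypData.pd, fderiv_fun_sum h]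

theorem pd_prod {ι : Type*} [DecidableEq ι] {s : Finset ι} {f : ι → Sc m}
    (h : ∀ i ∈ s, DifferentiableAt ℝ (f i) x) :
    pd a (fun y => ∏ i ∈ s, f i y) x
      = ∑ i ∈ s, (∏ j ∈ s.erase i, f j x) * pd a (f i) x := by
  simp [HypData.pd, fderiv_finset_prod h]

theorem smDiff {U : Set (Fin m → ℝ)} (hU : IsOpen U) {f : Sc m}
    (hf : ContDiffOn ℝ (⊤ : ℕ∞) f U) (hx : x ∈ U) : DifferentiableAt ℝ f x :=
  (hf.contDiffAt (hU.mem_nhds hx)).differentiableAt (by simp)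

theorem perm_nonfix {ι : Type*} [DecidableEq ι] (σ : Equiv.Perm ι) (hσ : σ ≠ 1) (i : ι) :
    ∃ j, j ≠ i ∧ σ j ≠ j := by
  obtain ⟨k, hk⟩ : ∃ k, σ k ≠ k := by
    by_contra h
    push_neg at h
    exact hσ (Equiv.ext fun k => h k)
  by_cases hki : k = i
  · refine ⟨σ k, ?_, ?_⟩
    · rw [hki] at hk ⊢; exact hk
    · intro h; exact hk (σ.injective h)
  · exact ⟨k, hki, hk⟩

theorem perm_collapse {ι : Type*} [Fintype ι] [DecidableEq ι] (v H : ι → ι → ℝ)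
    (hv : ∀ i j, v i j = if i = j then 1 else 0) :
    ∑ σ : Equiv.Perm ι, ((Equiv.Perm.sign σ : ℤ) : ℝ)
        * ∑ i, (∏ j ∈ Finset.univ.erase i, v (σ j) j) * H (σ i) i
      = ∑ i, H i i := by
  rw [Finset.sum_eq_single (1 : Equiv.Perm ι)]
  · simp [hv]
  · intro σ _ hσ
    have : ∀ i : ι, (∏ j ∈ Finset.univ.erase i, v (σ j) j) * H (σ i) i = 0 := by
      intro i
      obtain ⟨j, hji, hj⟩ := perm_nonfix σ hσ i
      have h0 : v (σ j) j = 0 := by rw [hv]; simp [hj]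
      have : (∏ k ∈ Finset.univ.erase i, v (σ k) k) = 0 :=
        Finset.prod_eq_zero (Finset.mem_erase.2 ⟨hji, Finset.mem_univ j⟩) h0
      rw [this, zero_mul]
    simp [this]
  · simp

end HypAux
namespace HypAux
open HypData

variable {m : ℕ}

theorem blockA_ll (γ : Ten m) (ℓ : Vec m) (ℓ2 : Sc m) (y : Fin m → ℝ) (a b : Fin m) :
    blockA γ ℓ ℓ2 y (Sum.inl a) (Sum.inl b) = γ y a b := rfl
theorem blockA_lr (γ : Ten m) (ℓ : Vec m) (ℓ2 : Sc m) (y : Fin m → ℝ) (a : Fin m) (u : Unit) :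
    blockA γ ℓ ℓ2 y (Sum.inl a) (Sum.inr u) = ℓ y a := rfl
theorem blockA_rl (γ : Ten m) (ℓ : Vec m) (ℓ2 : Sc m) (y : Fin m → ℝ) (b : Fin m) (u : Unit) :
    blockA γ ℓ ℓ2 y (Sum.inr u) (Sum.inl b) = ℓ y b := rfl
theorem blockA_rr (γ : Ten m) (ℓ : Vec m) (ℓ2 : Sc m) (y : Fin m → ℝ) (u v : Unit) :
    blockA γ ℓ ℓ2 y (Sum.inr u) (Sum.inr v) = ℓ2 y := rfl

/-- The inverse block matrix at a point. -/
def Bmat (P : Ten m) (n : Vec m) (n2 : Sc m) (x : Fin m → ℝ) :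
    Matrix (Fin m ⊕ Unit) (Fin m ⊕ Unit) ℝ :=
  fun i j =>
    match i, j with
    | Sum.inl a, Sum.inl b => P x a b
    | Sum.inl a, Sum.inr _ => n x a
    | Sum.inr _, Sum.inl b => n x b
    | Sum.inr _, Sum.inr _ => n2 x

theorem Bmat_mul_one {γ : Ten m} {ℓ : Vec m} {ℓ2 : Sc m} {P : Ten m} {n : Vec m} {n2 : Sc m}
    {x : Fin m → ℝ} (hsγ : ∀ a b, γ x a b = γ x b a)
    (hinv : InvBlocks (γ x) (ℓ x) (ℓ2 x) (P x) (n x) (n2 x)) :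
    Bmat P n n2 x * blockA γ ℓ ℓ2 x = 1 := by
  obtain ⟨h1, h2, h3, h4⟩ := hinv
  ext i j
  cases i with
  | inl a =>
    cases j with
    | inl b =>
      have := h1 a b
      simp only [Matrix.mul_apply, Fintype.sum_sum_type, Bmat, blockA, Matrix.one_apply]
      simp only [Finset.univ_unique, Finset.sum_const, Finset.card_singleton, one_smul]
      rw [this]
      simp [kd]
    | inr u =>
      have := h2 a
      simp only [Matrix.mul_apply, Fintype.sum_sum_type, Bmat, blockA, Matrix.one_apply]
      simp only [Finset.univ_unique, Finset.sum_const, Finset.card_singleton, one_smul]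
      simp only [mul_comm (n x a) (ℓ2 x)] at *
      rw [this]
      simp
  | inr u =>
    cases j with
    | inl b =>
      have := h4 b
      simp only [Matrix.mul_apply, Fintype.sum_sum_type, Bmat, blockA, Matrix.one_apply]
      simp only [Finset.univ_unique, Finset.sum_const, Finset.card_singleton, one_smul]
      have e : (∑ c, n x c * γ x c b) + n2 x * ℓ x b = 0 := by
        rw [show (∑ c, n x c * γ x c b) = ∑ c, γ x b c * n x c from
          Finset.sum_congr rfl fun c _ => by rw [hsγ b c, mul_comm]]
        exact h4 b
      rw [e]
      simp
    | inr v =>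
      simp only [Matrix.mul_apply, Fintype.sum_sum_type, Bmat, blockA, Matrix.one_apply]
      simp only [Finset.univ_unique, Finset.sum_const, Finset.card_singleton, one_smul]
      rw [h3]
      simp

end HypAux
namespace HypAux
open HypData

variable {m : ℕ}

/-- The "trace" `tr(𝔸⁻¹ ∂ₐ𝔸)`. -/
def trT (γ : Ten m) (ℓ : Vec m) (ℓ2 : Sc m) (P : Ten m) (n : Vec m) (n2 : Sc m)
    (a : Fin m) (x : Fin m → ℝ) : ℝ :=
  (∑ c, ∑ d, P x c d * pd a (fun y => γ y d c) x)
    + 2 * (∑ c, n x c * pd a (fun y => ℓ y c) x) + n2 x * pd a ℓ2 x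

theorem detA_facts {U : Set (Fin m → ℝ)} (hU : IsOpen U)
    {γ : Ten m} {ℓ : Vec m} {ℓ2 : Sc m} {P : Ten m} {n : Vec m} {n2 : Sc m}
    (hd : MetricData U γ ℓ ℓ2 P n n2) {x : Fin m → ℝ} (hx : x ∈ U) :
    DifferentiableAt ℝ (detA γ ℓ ℓ2) x ∧ detA γ ℓ ℓ2 x ≠ 0 ∧
      ∀ a, pd a (detA γ ℓ ℓ2) x = detA γ ℓ ℓ2 x * trT γ ℓ ℓ2 P n n2 a x := by
  obtain ⟨hγ, hℓ, hℓ2, hP, hn, hn2, hsγ, hsP, hinv⟩ := hd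
  set B₀ := Bmat P n n2 x with hB₀
  have hBA : B₀ * blockA γ ℓ ℓ2 x = 1 := Bmat_mul_one (hsγ x hx) (hinv x hx)
  have hAB : blockA γ ℓ ℓ2 x * B₀ = 1 := mul_eq_one_comm.mp hBA
  have hdet1 : detA γ ℓ ℓ2 x * B₀.det = 1 := by
    rw [detA, ← Matrix.det_mul, hAB, Matrix.det_one]
  have hne : detA γ ℓ ℓ2 x ≠ 0 := left_ne_zero_of_mul_eq_one hdet1
  -- entry differentiability
  have hEdiff : ∀ i j : Fin m ⊕ Unit,
      DifferentiableAt ℝ (fun y => blockA γ ℓ ℓ2 y i j) x := by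
    rintro (c | u) (d | v)
    · exact smDiff hU (hγ c d) hx
    · exact smDiff hU (hℓ c) hx
    · exact smDiff hU (hℓ d) hx
    · exact smDiff hU hℓ2 hx
  set g : (Fin m ⊕ Unit) → (Fin m ⊕ Unit) → Sc m :=
    fun i j y => ∑ k, B₀ i k * blockA γ ℓ ℓ2 y k j with hg
  have hgdiff : ∀ i j, DifferentiableAt ℝ (g i j) x := fun i j =>
    DifferentiableAt.fun_sum fun k _ => (hEdiff k j).const_mul (B₀ i k)
  have hgval : ∀ i j, g i j x = if i = j then 1 else 0 := by
    intro i j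
    have h1 : (B₀ * blockA γ ℓ ℓ2 x) i j
        = (1 : Matrix (Fin m ⊕ Unit) (Fin m ⊕ Unit) ℝ) i j := by rw [hBA]
    rw [Matrix.mul_apply, Matrix.one_apply] at h1
    exact h1
  -- the determinant as a function of y
  have hfun : ∀ y, detA γ ℓ ℓ2 y
      = detA γ ℓ ℓ2 x * ∑ σ : Equiv.Perm (Fin m ⊕ Unit),
          ((Equiv.Perm.sign σ : ℤ) : ℝ) * ∏ i, g (σ i) i y := by
    intro y
    have h1 : detA γ ℓ ℓ2 y = detA γ ℓ ℓ2 x * (B₀ * blockA γ ℓ ℓ2 y).det := by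
      rw [detA, detA, Matrix.det_mul, ← mul_assoc, ← Matrix.det_mul, hAB,
        Matrix.det_one, one_mul]
    rw [h1, Matrix.det_apply']
    congr 1
  have hproddiff : ∀ σ : Equiv.Perm (Fin m ⊕ Unit),
      DifferentiableAt ℝ (fun y => ∏ i, g (σ i) i y) x := fun σ =>
    (HasFDerivAt.finset_prod fun i _ => (hgdiff (σ i) i).hasFDerivAt).differentiableAt
  have hEq : detA γ ℓ ℓ2 =ᶠ[nhds x] fun y => detA γ ℓ ℓ2 x
      * ∑ σ : Equiv.Perm (Fin m ⊕ Unit),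
          ((Equiv.Perm.sign σ : ℤ) : ℝ) * ∏ i, g (σ i) i y :=
    Filter.Eventually.of_forall hfun
  have hdiff : DifferentiableAt ℝ (detA γ ℓ ℓ2) x :=
    hEq.differentiableAt_iff.mpr ((DifferentiableAt.fun_sum fun σ _ =>
      (hproddiff σ).const_mul _).const_mul _)
  refine ⟨hdiff, hne, fun a => ?_⟩
  have hstep : pd a (detA γ ℓ ℓ2) x
      = detA γ ℓ ℓ2 x * ∑ σ : Equiv.Perm (Fin m ⊕ Unit),
          ((Equiv.Perm.sign σ : ℤ) : ℝ)
            * ∑ i, (∏ j ∈ Finset.univ.erase i, g (σ j) j x) * pd a (g (σ i) i) x := by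
    rw [pd_congr_nhds hEq,
      pd_const_mul (DifferentiableAt.fun_sum fun σ _ => (hproddiff σ).const_mul _)]
    congr 1
    rw [pd_sum fun σ _ => (hproddiff σ).const_mul _]
    refine Finset.sum_congr rfl fun σ _ => ?_
    rw [pd_const_mul (hproddiff σ)]
    congr 1
    exact pd_prod fun i _ => hgdiff (σ i) i
  rw [hstep, perm_collapse (fun i j => g i j x) (fun i j => pd a (g i j) x) hgval]
  congr 1
  -- now compute the trace sum
  have hpdg : ∀ i : Fin m ⊕ Unit, pd a (g i i) x
      = ∑ k, B₀ i k * pd a (fun y => blockA γ ℓ ℓ2 y k i) x := by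
    intro i
    rw [hg]
    rw [pd_sum fun k _ => (hEdiff k i).const_mul (B₀ i k)]
    exact Finset.sum_congr rfl fun k _ => pd_const_mul (hEdiff k i) (B₀ i k)
  rw [Finset.sum_congr rfl fun i _ => hpdg i]
  rw [trT, Fintype.sum_sum_type]
  simp only [Fintype.sum_sum_type, Finset.univ_unique, Finset.sum_const,
    Finset.card_singleton, one_smul]
  have hBll : ∀ c d : Fin m, B₀ (Sum.inl c) (Sum.inl d) = P x c d := fun _ _ => rfl
  have hBlr : ∀ (c : Fin m) (u : Unit), B₀ (Sum.inl c) (Sum.inr u) = n x c := fun _ _ => rfl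
  have hBrl : ∀ (u : Unit) (d : Fin m), B₀ (Sum.inr u) (Sum.inl d) = n x d := fun _ _ => rfl
  have hBrr : ∀ (u v : Unit), B₀ (Sum.inr u) (Sum.inr v) = n2 x := fun _ _ => rfl
  simp only [hBll, hBlr, hBrl, hBrr, blockA_ll, blockA_lr, blockA_rl, blockA_rr]
  simp only [Finset.sum_singleton]
  rw [Finset.sum_add_distrib]
  ring

end HypAux
namespace HypAux
open HypData

variable {m : ℕ}

theorem sqrtDetA_facts {U : Set (Fin m → ℝ)} (hU : IsOpen U)
    {γ : Ten m} {ℓ : Vec m} {ℓ2 : Sc m} {P : Ten m} {n : Vec m} {n2 : Sc m}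
    (hd : MetricData U γ ℓ ℓ2 P n n2) {x : Fin m → ℝ} (hx : x ∈ U) :
    DifferentiableAt ℝ (fun y => Real.sqrt |detA γ ℓ ℓ2 y|) x ∧
      0 < Real.sqrt |detA γ ℓ ℓ2 x| ∧
      ∀ a, pd a (fun y => Real.sqrt |detA γ ℓ ℓ2 y|) x
        = Real.sqrt |detA γ ℓ ℓ2 x| * trT γ ℓ ℓ2 P n n2 a x / 2 := by
  obtain ⟨hdiff, hne, hpd⟩ := detA_facts hU hd hx
  set D := detA γ ℓ ℓ2 with hD
  set s : ℝ := if 0 < D x then 1 else -1 with hs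
  have hsD : 0 < s * D x := by
    by_cases h : 0 < D x
    · simp [hs, h]
    · have h2 : D x < 0 := lt_of_le_of_ne (not_lt.mp h) hne
      simp only [hs, if_neg h]
      nlinarith
  have habs : ∀ y, 0 < s * D y → |D y| = s * D y := by
    intro y hy
    have h1 : |s| = 1 := by
      by_cases h : 0 < D x <;> simp [hs, h]
    calc |D y| = |s| * |D y| := by rw [h1, one_mul]
    _ = |s * D y| := (abs_mul s (D y)).symm
    _ = s * D y := abs_of_pos hy
  have hc : ContinuousAt (fun y => s * D y) x := continuousAt_const.mul hdiff.continuousAt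
  have hev : ∀ᶠ y in nhds x, 0 < s * D y := hc.eventually (eventually_gt_nhds hsD)
  have hEq : (fun y => Real.sqrt |D y|) =ᶠ[nhds x] fun y => Real.sqrt (s * D y) :=
    hev.mono fun y hy => by simp only [habs y hy]
  have hfd : HasFDerivAt (fun y => s * D y) (s • fderiv ℝ D x) x :=
    hdiff.hasFDerivAt.const_mul s
  have hsq : HasFDerivAt (fun y => Real.sqrt (s * D y))
      ((1 / (2 * Real.sqrt (s * D x))) • (s • fderiv ℝ D x)) x :=
    hfd.sqrt (ne_of_gt hsD)
  have hpos : 0 < Real.sqrt |D x| := Real.sqrt_pos.2 (abs_pos.2 hne)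
  refine ⟨hEq.differentiableAt_iff.mpr hsq.differentiableAt, hpos, fun a => ?_⟩
  rw [pd_congr_nhds hEq]
  have h2 : pd a (fun y => Real.sqrt (s * D y)) x
      = (1 / (2 * Real.sqrt (s * D x))) * (s * pd a D x) := by
    unfold HypData.pd
    rw [hsq.fderiv]
    simp
  rw [h2, hpd a, show |D x| = s * D x from habs x hsD]
  have h3 : Real.sqrt (s * D x) ^ 2 = s * D x := Real.sq_sqrt (le_of_lt hsD)
  have h5 : Real.sqrt (s * D x) ≠ 0 := ne_of_gt (Real.sqrt_pos.2 hsD)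
  field_simp
  linear_combination (-trT γ ℓ ℓ2 P n n2 a x) * h3
end HypAux
namespace HypAux
open HypData

variable {m : ℕ}

section PointFacts

variable {U : Set (Fin m → ℝ)} (hU : IsOpen U)
  {γ : Ten m} {ℓ : Vec m} {ℓ2 : Sc m} {P : Ten m} {n : Vec m} {n2 : Sc m}
  (hd : MetricData U γ ℓ ℓ2 P n n2) {x : Fin m → ℝ} (hx : x ∈ U)

include hU hd hx

theorem pdγ_symm (c a b : Fin m) :
    pd c (fun y => γ y a b) x = pd c (fun y => γ y b a) x :=
  pd_congrU hU hx fun y hy => hd.2.2.2.2.2.2.1 y hy a b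

theorem γ_symm' (a b : Fin m) : γ x a b = γ x b a := hd.2.2.2.2.2.2.1 x hx a b

theorem P_symm' (a b : Fin m) : P x a b = P x b a := hd.2.2.2.2.2.2.2.1 x hx a b

theorem hPγ (c e : Fin m) :
    (∑ d, γ x e d * P x d c) = kd c e - n x c * ℓ x e := by
  have h1 := (hd.2.2.2.2.2.2.2.2 x hx).1 c e
  have : (∑ d, γ x e d * P x d c) = ∑ d, P x c d * γ x d e :=
    Finset.sum_congr rfl fun d _ => by
      rw [γ_symm' hU hd hx e d, P_symm' hU hd hx d c, mul_comm]
  rw [this]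
  linarith [h1]

theorem hγn (e : Fin m) : (∑ d, γ x e d * n x d) = -(n2 x * ℓ x e) := by
  have h4 := (hd.2.2.2.2.2.2.2.2 x hx).2.2.2 e
  linarith [h4]

theorem D4 (b a : Fin m) :
    (∑ d, (γ x a d * pd b (fun y => n y d) x + n x d * pd b (fun y => γ y a d) x))
      + (n2 x * pd b (fun y => ℓ y a) x + ℓ x a * pd b n2 x) = 0 := by
  obtain ⟨hγs, hℓs, hℓ2s, hPs, hns, hn2s, hsγ, hsP, hinv⟩ := hd
  have hdterm : ∀ d : Fin m, DifferentiableAt ℝ (fun y => γ y a d * n y d) x :=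
    fun d => (smDiff hU (hγs a d) hx).mul (smDiff hU (hns d) hx)
  have hdiff1 : DifferentiableAt ℝ (fun y => ∑ d, γ y a d * n y d) x :=
    DifferentiableAt.fun_sum fun d _ => hdterm d
  have hdiff2 : DifferentiableAt ℝ (fun y => n2 y * ℓ y a) x :=
    (smDiff hU hn2s hx).mul (smDiff hU (hℓs a) hx)
  have h0 : ∀ y ∈ U, ((∑ d, γ y a d * n y d) + n2 y * ℓ y a) = (fun _ => (0:ℝ)) y :=
    fun y hy => hinv y hy |>.2.2.2 a
  have e1 : pd b (fun y => (∑ d, γ y a d * n y d) + n2 y * ℓ y a) x = 0 := by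
    rw [pd_congrU hU hx h0, pd_const]
  rw [pd_add hdiff1 hdiff2, pd_sum (fun d _ => hdterm d)] at e1
  have e2 : ∀ d : Fin m, pd b (fun y => γ y a d * n y d) x
      = γ x a d * pd b (fun y => n y d) x + n x d * pd b (fun y => γ y a d) x :=
    fun d => pd_mul (smDiff hU (hγs a d) hx) (smDiff hU (hns d) hx)
  rw [Finset.sum_congr rfl fun d _ => e2 d] at e1
  have e3 : pd b (fun y => n2 y * ℓ y a) x
      = n2 x * pd b (fun y => ℓ y a) x + ℓ x a * pd b n2 x :=
    pd_mul (smDiff hU hn2s hx) (smDiff hU (hℓs a) hx)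
  rw [e3] at e1
  linarith [e1]

theorem traceGam (e : Fin m) :
    (∑ c, Gam0 γ ℓ P n x c c e)
        + (n2 x * pd e ℓ2 x / 2 + ∑ c, Ff ℓ x e c * n x c)
      = trT γ ℓ ℓ2 P n n2 e x / 2 := by
  have hcancel : ∑ c, ∑ d, P x c d * pd c (fun y => γ y e d) x
      = ∑ c, ∑ d, P x c d * pd d (fun y => γ y c e) x := by
    rw [Finset.sum_comm]
    exact Finset.sum_congr rfl fun u _ => Finset.sum_congr rfl fun v _ => by
      rw [pdγ_symm hU hd hx v e u, P_symm' hU hd hx u v]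
  have hsymsum : ∑ c, ∑ d, P x c d * pd e (fun y => γ y c d) x
      = ∑ c, ∑ d, P x c d * pd e (fun y => γ y d c) x :=
    Finset.sum_congr rfl fun c _ => Finset.sum_congr rfl fun d _ => by
      rw [pdγ_symm hU hd hx e c d]
  simp only [Gam0, Ff, trT]
  rw [Finset.sum_add_distrib]
  have hexp : ∑ c, (∑ d, P x c d * (pd c (fun y => γ y e d) x + pd e (fun y => γ y c d) x
        - pd d (fun y => γ y c e) x)) / 2
      = ((∑ c, ∑ d, P x c d * pd c (fun y => γ y e d) x)
        + (∑ c, ∑ d, P x c d * pd e (fun y => γ y c d) x)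
        - (∑ c, ∑ d, P x c d * pd d (fun y => γ y c e) x)) / 2 := by
    rw [← Finset.sum_div]
    congr 1
    have h1 : ∀ c : Fin m, (∑ d, P x c d * (pd c (fun y => γ y e d) x
          + pd e (fun y => γ y c d) x - pd d (fun y => γ y c e) x))
        = (∑ d, P x c d * pd c (fun y => γ y e d) x)
          + ((∑ d, P x c d * pd e (fun y => γ y c d) x)
          - (∑ d, P x c d * pd d (fun y => γ y c e) x)) := fun c => by
      rw [← Finset.sum_sub_distrib, ← Finset.sum_add_distrib]
      exact Finset.sum_congr rfl fun d _ => by ring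
    rw [Finset.sum_congr rfl fun c _ => h1 c, Finset.sum_add_distrib,
      Finset.sum_sub_distrib]
    ring
  rw [hexp, hcancel, hsymsum]
  have hl : ∑ c, n x c * (pd c (fun y => ℓ y e) x + pd e (fun y => ℓ y c) x) / 2
        + ∑ c, (pd e (fun y => ℓ y c) x - pd c (fun y => ℓ y e) x) / 2 * n x c
      = ∑ c, n x c * pd e (fun y => ℓ y c) x := by
    rw [← Finset.sum_add_distrib]
    exact Finset.sum_congr rfl fun c _ => by ring
  linear_combination hl

end PointFacts
end HypAux
namespace HypAux
open HypData

variable {m : ℕ}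

theorem sum_kd_mul (e : Fin m) (f : Fin m → ℝ) : ∑ c, kd c e * f c = f e := by
  simp [kd, ite_mul]

section PointFacts2

variable {U : Set (Fin m → ℝ)} (hU : IsOpen U)
  {γ : Ten m} {ℓ : Vec m} {ℓ2 : Sc m} {P : Ten m} {n : Vec m} {n2 : Sc m}
  (hd : MetricData U γ ℓ ℓ2 P n n2) {x : Fin m → ℝ} (hx : x ∈ U)

include hU hd hx

theorem Wlem (b a : Fin m) :
    Uf γ ℓ n n2 x b a
      = -(((∑ c, n x c * (pd b (fun y => γ y a c) x + pd a (fun y => γ y b c) x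
            - pd c (fun y => γ y b a) x))
          + n2 x * (pd b (fun y => ℓ y a) x + pd a (fun y => ℓ y b) x)) / 2) := by
  have hb := D4 hU hd hx b a
  have ha := D4 hU hd hx a b
  rw [Finset.sum_add_distrib] at hb ha
  have s1 : ∑ c, (n x c * pd c (fun y => γ y b a) x + γ x c a * pd b (fun y => n y c) x
        + γ x b c * pd a (fun y => n y c) x)
      = (∑ c, n x c * pd c (fun y => γ y b a) x)
        + ((∑ c, γ x a c * pd b (fun y => n y c) x)
        + (∑ c, γ x b c * pd a (fun y => n y c) x)) := by
    rw [← Finset.sum_add_distrib, ← Finset.sum_add_distrib]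
    exact Finset.sum_congr rfl fun c _ => by rw [γ_symm' hU hd hx a c]; ring
  have s2 : ∑ c, n x c * (pd b (fun y => γ y a c) x + pd a (fun y => γ y b c) x
        - pd c (fun y => γ y b a) x)
      = (∑ c, n x c * pd b (fun y => γ y a c) x)
        + ((∑ c, n x c * pd a (fun y => γ y b c) x)
        - (∑ c, n x c * pd c (fun y => γ y b a) x)) := by
    rw [← Finset.sum_sub_distrib, ← Finset.sum_add_distrib]
    exact Finset.sum_congr rfl fun c _ => by ring
  simp only [Uf]
  rw [s1, s2]
  linear_combination hb / 2 + ha / 2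

theorem contract_aux (e : Fin m) (M : Fin m → ℝ) (L : ℝ) :
    ∑ d, γ x e d * ((∑ c, P x d c * M c) / 2 + n x d * L / 2)
      = M e / 2 - ℓ x e * ((∑ c, n x c * M c) + n2 x * L) / 2 := by
  have e1 : ∀ d, γ x e d * ((∑ c, P x d c * M c) / 2 + n x d * L / 2)
      = (∑ c, (γ x e d * P x d c) * M c) / 2 + (γ x e d * n x d) * L / 2 := by
    intro d
    have h : γ x e d * ∑ c, P x d c * M c = ∑ c, (γ x e d * P x d c) * M c := by
      rw [Finset.mul_sum]
      exact Finset.sum_congr rfl fun c _ => (mul_assoc _ _ _).symm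
    linear_combination h / 2
  rw [Finset.sum_congr rfl fun d _ => e1 d, Finset.sum_add_distrib]
  have e2 : ∑ d, (∑ c, (γ x e d * P x d c) * M c) / 2
      = (∑ c, (∑ d, γ x e d * P x d c) * M c) / 2 := by
    rw [← Finset.sum_div]
    congr 1
    rw [Finset.sum_comm]
    exact Finset.sum_congr rfl fun c _ => by rw [Finset.sum_mul]
  have e3 : ∑ d, (γ x e d * n x d) * L / 2 = (∑ d, γ x e d * n x d) * L / 2 := by
    rw [← Finset.sum_div, ← Finset.sum_mul]
  rw [e2, e3, hγn hU hd hx e]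
  have e4 : ∑ c, (∑ d, γ x e d * P x d c) * M c
      = (∑ c, kd c e * M c) - ∑ c, (n x c * ℓ x e) * M c := by
    rw [← Finset.sum_sub_distrib]
    refine Finset.sum_congr rfl fun c _ => ?_
    rw [hPγ hU hd hx c e]
    ring
  rw [e4, sum_kd_mul]
  have e5 : ∑ c, (n x c * ℓ x e) * M c = ℓ x e * ∑ c, n x c * M c := by
    rw [Finset.mul_sum]
    exact Finset.sum_congr rfl fun c _ => by ring
  rw [e5]
  ring

theorem Core2 (τ' : Ten m) (hτs : ∀ a b, τ' x a b = τ' x b a) (a : Fin m) :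
    ∑ b, ∑ d, Gam0 γ ℓ P n x d b a * (∑ e, τ' x b e * γ x e d)
      = (∑ b, ∑ c, τ' x b c * ℓ x c * Uf γ ℓ n n2 x b a)
        + (∑ b, ∑ c, τ' x b c * pd a (fun y => γ y b c) x) / 2 := by
  have hC1 : ∀ b e : Fin m, ∑ d, γ x e d * Gam0 γ ℓ P n x d b a
      = (pd b (fun y => γ y a e) x + pd a (fun y => γ y b e) x
          - pd e (fun y => γ y b a) x) / 2
        + ℓ x e * Uf γ ℓ n n2 x b a := by
    intro b e
    have h := contract_aux hU hd hx e
        (fun c => pd b (fun y => γ y a c) x + pd a (fun y => γ y b c) x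
          - pd c (fun y => γ y b a) x)
        (pd b (fun y => ℓ y a) x + pd a (fun y => ℓ y b) x)
    simp only [Gam0]
    rw [Wlem hU hd hx b a]
    linear_combination h
  have stepA : ∀ b : Fin m, ∑ d, Gam0 γ ℓ P n x d b a * (∑ e, τ' x b e * γ x e d)
      = ∑ e, τ' x b e * (∑ d, γ x e d * Gam0 γ ℓ P n x d b a) := by
    intro b
    have h1 : ∀ d, Gam0 γ ℓ P n x d b a * (∑ e, τ' x b e * γ x e d)
        = ∑ e, τ' x b e * (γ x e d * Gam0 γ ℓ P n x d b a) := fun d => by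
      rw [Finset.mul_sum]
      exact Finset.sum_congr rfl fun e _ => by ring
    rw [Finset.sum_congr rfl fun d _ => h1 d, Finset.sum_comm]
    exact Finset.sum_congr rfl fun e _ => (Finset.mul_sum _ _ _).symm
  rw [Finset.sum_congr rfl fun b _ => stepA b]
  rw [Finset.sum_congr rfl fun b _ => Finset.sum_congr rfl fun e _ => by rw [hC1 b e]]
  have split : ∀ b : Fin m, ∑ e, τ' x b e
        * ((pd b (fun y => γ y a e) x + pd a (fun y => γ y b e) x
            - pd e (fun y => γ y b a) x) / 2 + ℓ x e * Uf γ ℓ n n2 x b a)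
      = (∑ e, τ' x b e * ℓ x e * Uf γ ℓ n n2 x b a)
        + ((∑ e, τ' x b e * pd b (fun y => γ y a e) x)
          + ((∑ e, τ' x b e * pd a (fun y => γ y b e) x)
          - (∑ e, τ' x b e * pd e (fun y => γ y b a) x))) / 2 := by
    intro b
    calc ∑ e, τ' x b e * ((pd b (fun y => γ y a e) x + pd a (fun y => γ y b e) x
            - pd e (fun y => γ y b a) x) / 2 + ℓ x e * Uf γ ℓ n n2 x b a)
        = ∑ e, (τ' x b e * ℓ x e * Uf γ ℓ n n2 x b a
            + (τ' x b e * pd b (fun y => γ y a e) x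
              + (τ' x b e * pd a (fun y => γ y b e) x
                - τ' x b e * pd e (fun y => γ y b a) x)) / 2) :=
          Finset.sum_congr rfl fun e _ => by ring
      _ = (∑ e, τ' x b e * ℓ x e * Uf γ ℓ n n2 x b a)
            + ∑ e, (τ' x b e * pd b (fun y => γ y a e) x
              + (τ' x b e * pd a (fun y => γ y b e) x
                - τ' x b e * pd e (fun y => γ y b a) x)) / 2 := Finset.sum_add_distrib
      _ = _ := by
          rw [← Finset.sum_div, Finset.sum_add_distrib, Finset.sum_sub_distrib]
  rw [Finset.sum_congr rfl fun b _ => split b, Finset.sum_add_distrib]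
  have e6 : ∑ b, ((∑ e, τ' x b e * pd b (fun y => γ y a e) x)
        + ((∑ e, τ' x b e * pd a (fun y => γ y b e) x)
        - (∑ e, τ' x b e * pd e (fun y => γ y b a) x))) / 2
      = ((∑ b, ∑ e, τ' x b e * pd b (fun y => γ y a e) x)
        + ((∑ b, ∑ e, τ' x b e * pd a (fun y => γ y b e) x)
        - (∑ b, ∑ e, τ' x b e * pd e (fun y => γ y b a) x))) / 2 := by
    rw [← Finset.sum_div, Finset.sum_add_distrib, Finset.sum_sub_distrib]
  rw [e6]
  have cancel : ∑ b, ∑ e, τ' x b e * pd b (fun y => γ y a e) x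
      = ∑ b, ∑ e, τ' x b e * pd e (fun y => γ y b a) x := by
    rw [Finset.sum_comm]
    exact Finset.sum_congr rfl fun u _ => Finset.sum_congr rfl fun v _ => by
      rw [hτs v u, pdγ_symm hU hd hx v a u]
  linear_combination cancel / 2

end PointFacts2
end HypAux
open HypAux in
open HypData in
/-- Lemma 9 of the paper, the divergence (coordinate) form of the
two shell-equation left-hand sides, for an arbitrary smooth symmetric `τ^{ab}`. -/
theorem statement18 (m : ℕ) (hm : 1 ≤ m) (U : Set (Fin m → ℝ)) (hU : IsOpen U)
    (γ : Ten m) (ℓ : Vec m) (ℓ2 : Sc m) (P : Ten m) (n : Vec m) (n2 : Sc m)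
    (hdata : MetricData U γ ℓ ℓ2 P n n2)
    (τ : Ten m) (hτsm : SmTen U τ) (hτs : ∀ x ∈ U, ∀ a b, τ x a b = τ x b a) :
    -- (1)
    ((∀ x ∈ U,
      (∑ a, covD1U (Gam0 γ ℓ P n) (fun y a' => ∑ b, τ y a' b * ℓ y b) x a a)
        + (∑ a, (∑ b, τ x a b * ℓ x b)
            * (n2 x * pd a ℓ2 x / 2 + ∑ c, Ff ℓ x a c * n x c))
      = (Real.sqrt (|detA γ ℓ ℓ2 x|))⁻¹
          * ∑ a, pd a (fun y => Real.sqrt (|detA γ ℓ ℓ2 y|)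
              * ∑ b, τ y a b * ℓ y b) x)
    -- (2)
    ∧ (∀ x ∈ U, ∀ a,
      (∑ b, covD11 (Gam0 γ ℓ P n) (fun y b' a' => ∑ c, τ y b' c * γ y c a') x b b a)
        + (∑ b, (∑ c, τ x b c * γ x c a)
            * (n2 x * pd b ℓ2 x / 2 + ∑ c, Ff ℓ x b c * n x c))
        + (∑ b, ∑ c, τ x b c * ℓ x c * Uf γ ℓ n n2 x b a)
      = (Real.sqrt (|detA γ ℓ ℓ2 x|))⁻¹
          * (∑ b, pd b (fun y => Real.sqrt (|detA γ ℓ ℓ2 y|)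
              * ∑ c, τ y b c * γ y c a) x)
        - (∑ b, ∑ d, τ x b d * pd a (fun y => γ y b d) x) / 2)) := by
  constructor
  · -- Part (1)
    intro x hx
    obtain ⟨hsqdiff, hsqpos, hsqpd⟩ := sqrtDetA_facts hU hdata hx
    have hXdiff : ∀ a' : Fin m, DifferentiableAt ℝ (fun y => ∑ b, τ y a' b * ℓ y b) x :=
      fun a' => DifferentiableAt.fun_sum fun b _ =>
        (smDiff hU (hτsm a' b) hx).mul (smDiff hU (hdata.2.1 b) hx)
    have hR : ∀ a : Fin m,
        pd a (fun y => Real.sqrt |detA γ ℓ ℓ2 y| * ∑ b, τ y a b * ℓ y b) x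
          = Real.sqrt |detA γ ℓ ℓ2 x| * pd a (fun y => ∑ b, τ y a b * ℓ y b) x
            + (∑ b, τ x a b * ℓ x b)
              * (Real.sqrt |detA γ ℓ ℓ2 x| * trT γ ℓ ℓ2 P n n2 a x / 2) := by
      intro a
      rw [pd_mul hsqdiff (hXdiff a), hsqpd a]
    rw [Finset.sum_congr rfl fun a (_ : a ∈ Finset.univ) => hR a]
    have hfact : ∑ a, (Real.sqrt |detA γ ℓ ℓ2 x|
            * pd a (fun y => ∑ b, τ y a b * ℓ y b) x
          + (∑ b, τ x a b * ℓ x b)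
            * (Real.sqrt |detA γ ℓ ℓ2 x| * trT γ ℓ ℓ2 P n n2 a x / 2))
        = Real.sqrt |detA γ ℓ ℓ2 x|
            * ∑ a, (pd a (fun y => ∑ b, τ y a b * ℓ y b) x
              + (∑ b, τ x a b * ℓ x b) * (trT γ ℓ ℓ2 P n n2 a x / 2)) := by
      rw [Finset.mul_sum]
      exact Finset.sum_congr rfl fun a _ => by ring
    rw [hfact, ← mul_assoc, inv_mul_cancel₀ (ne_of_gt hsqpos), one_mul]
    simp only [covD1U]
    have htr : ∀ d : Fin m, (∑ b, τ x d b * ℓ x b) * (trT γ ℓ ℓ2 P n n2 d x / 2)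
        = (∑ b, τ x d b * ℓ x b) * (∑ c, Gam0 γ ℓ P n x c c d)
          + (∑ b, τ x d b * ℓ x b)
            * (n2 x * pd d ℓ2 x / 2 + ∑ c, Ff ℓ x d c * n x c) := by
      intro d
      rw [← mul_add, traceGam hU hdata hx d]
    have hswap : ∑ a, ∑ d, Gam0 γ ℓ P n x a a d * (∑ b, τ x d b * ℓ x b)
        = ∑ d, (∑ b, τ x d b * ℓ x b) * (∑ c, Gam0 γ ℓ P n x c c d) := by
      rw [Finset.sum_comm]
      refine Finset.sum_congr rfl fun d _ => ?_
      rw [← Finset.sum_mul, mul_comm]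
    rw [Finset.sum_add_distrib, Finset.sum_add_distrib,
      Finset.sum_congr rfl fun d (_ : d ∈ Finset.univ) => htr d,
      Finset.sum_add_distrib]
    linear_combination hswap
  · -- Part (2)
    intro x hx a
    obtain ⟨hsqdiff, hsqpos, hsqpd⟩ := sqrtDetA_facts hU hdata hx
    have hSdiff : ∀ p q : Fin m, DifferentiableAt ℝ (fun y => ∑ c, τ y p c * γ y c q) x :=
      fun p q => DifferentiableAt.fun_sum fun c _ =>
        (smDiff hU (hτsm p c) hx).mul (smDiff hU (hdata.1 c q) hx)
    have hR : ∀ b : Fin m,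
        pd b (fun y => Real.sqrt |detA γ ℓ ℓ2 y| * ∑ c, τ y b c * γ y c a) x
          = Real.sqrt |detA γ ℓ ℓ2 x| * pd b (fun y => ∑ c, τ y b c * γ y c a) x
            + (∑ c, τ x b c * γ x c a)
              * (Real.sqrt |detA γ ℓ ℓ2 x| * trT γ ℓ ℓ2 P n n2 b x / 2) := by
      intro b
      rw [pd_mul hsqdiff (hSdiff b a), hsqpd b]
    rw [Finset.sum_congr rfl fun b (_ : b ∈ Finset.univ) => hR b]
    have hfact : ∑ b, (Real.sqrt |detA γ ℓ ℓ2 x|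
            * pd b (fun y => ∑ c, τ y b c * γ y c a) x
          + (∑ c, τ x b c * γ x c a)
            * (Real.sqrt |detA γ ℓ ℓ2 x| * trT γ ℓ ℓ2 P n n2 b x / 2))
        = Real.sqrt |detA γ ℓ ℓ2 x|
            * ∑ b, (pd b (fun y => ∑ c, τ y b c * γ y c a) x
              + (∑ c, τ x b c * γ x c a) * (trT γ ℓ ℓ2 P n n2 b x / 2)) := by
      rw [Finset.mul_sum]
      exact Finset.sum_congr rfl fun b _ => by ring
    rw [hfact, ← mul_assoc, inv_mul_cancel₀ (ne_of_gt hsqpos), one_mul]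
    have htr : ∀ d : Fin m, (∑ c, τ x d c * γ x c a) * (trT γ ℓ ℓ2 P n n2 d x / 2)
        = (∑ c, τ x d c * γ x c a) * (∑ c, Gam0 γ ℓ P n x c c d)
          + (∑ c, τ x d c * γ x c a)
            * (n2 x * pd d ℓ2 x / 2 + ∑ c, Ff ℓ x d c * n x c) := by
      intro d
      rw [← mul_add, traceGam hU hdata hx d]
    have hswap : ∑ b, ∑ d, Gam0 γ ℓ P n x b b d * (∑ c, τ x d c * γ x c a)
        = ∑ d, (∑ c, τ x d c * γ x c a) * (∑ c, Gam0 γ ℓ P n x c c d) := by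
      rw [Finset.sum_comm]
      refine Finset.sum_congr rfl fun d _ => ?_
      rw [← Finset.sum_mul, mul_comm]
    have hcore := Core2 hU hdata hx τ (hτs x hx) a
    have hL : ∀ b : Fin m, covD11 (Gam0 γ ℓ P n)
          (fun y b' a' => ∑ c, τ y b' c * γ y c a') x b b a
        = pd b (fun y => ∑ c, τ y b c * γ y c a) x
          + (∑ d, Gam0 γ ℓ P n x b b d * (∑ c, τ x d c * γ x c a))
          - (∑ d, Gam0 γ ℓ P n x d b a * (∑ c, τ x b c * γ x c d)) := fun b => rfl
    rw [Finset.sum_congr rfl fun b (_ : b ∈ Finset.univ) => hL b]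
    have hsplitL : ∑ b, (pd b (fun y => ∑ c, τ y b c * γ y c a) x
          + (∑ d, Gam0 γ ℓ P n x b b d * (∑ c, τ x d c * γ x c a))
          - (∑ d, Gam0 γ ℓ P n x d b a * (∑ c, τ x b c * γ x c d)))
        = (∑ b, pd b (fun y => ∑ c, τ y b c * γ y c a) x)
          + (∑ b, ∑ d, Gam0 γ ℓ P n x b b d * (∑ c, τ x d c * γ x c a))
          - (∑ b, ∑ d, Gam0 γ ℓ P n x d b a * (∑ c, τ x b c * γ x c d)) := by
      rw [Finset.sum_sub_distrib, Finset.sum_add_distrib]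
    have hsplitR : ∑ b, (pd b (fun y => ∑ c, τ y b c * γ y c a) x
          + (∑ c, τ x b c * γ x c a) * (trT γ ℓ ℓ2 P n n2 b x / 2))
        = (∑ b, pd b (fun y => ∑ c, τ y b c * γ y c a) x)
          + ∑ b, (∑ c, τ x b c * γ x c a) * (trT γ ℓ ℓ2 P n n2 b x / 2) :=
      Finset.sum_add_distrib
    have htrsum : ∑ d, (∑ c, τ x d c * γ x c a) * (trT γ ℓ ℓ2 P n n2 d x / 2)
        = (∑ d, (∑ c, τ x d c * γ x c a) * (∑ c, Gam0 γ ℓ P n x c c d))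
          + ∑ d, (∑ c, τ x d c * γ x c a)
            * (n2 x * pd d ℓ2 x / 2 + ∑ c, Ff ℓ x d c * n x c) := by
      rw [← Finset.sum_add_distrib]
      exact Finset.sum_congr rfl fun d _ => htr d
    linear_combination hsplitL - hsplitR - htrsum + hswap - hcore
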